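/- arXiv:1303.6684 — 2 statements merged into one kernel-verified Lean document; each statement's English description precedes it below -/
import Mathlib

section
/- For λ > 0, ν ∈ (0,1], δ > 0 and s > 0 with s^ν > λ, the Laplace transform of t ↦ λ^δ t^{δν−1} E_{ν,δν}^δ(−λ t^ν) equals λ^δ / (s^ν + λ)^δ. -/
open Real MeasureTheory intervalIntegral

noncomputable def ML1 (ν z : ℝ) : ℝ := ∑' n : ℕ, z ^ n / Real.Gamma (ν * n + 1)

noncomputable def ML2 (β γ z : ℝ) : ℝ := ∑' r : ℕ, z ^ r / Real.Gamma (β * r + γ)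

noncomputable def poch (ξ : ℝ) (r : ℕ) : ℝ := ∏ i ∈ Finset.range r, (ξ + i)

noncomputable def ML3 (β γ ξ z : ℝ) : ℝ :=
  ∑' r : ℕ, poch ξ r * z ^ r / (r.factorial * Real.Gamma (β * r + γ))

open Set


lemma poch_pos {δ : ℝ} (hδ : 0 < δ) (r : ℕ) : 0 < poch δ r :=
  Finset.prod_pos fun i _ => by positivity

lemma poch_mul_Gamma {δ : ℝ} (hδ : 0 < δ) (r : ℕ) :
    poch δ r * Real.Gamma δ = Real.Gamma (δ + r) := by
  induction r with
  | zero => simp [poch]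
  | succ n ih =>
    have h1 : δ + (n : ℝ) ≠ 0 := by positivity
    rw [poch, Finset.prod_range_succ, ← poch, mul_right_comm, ih]
    push_cast
    rw [show δ + ((n : ℝ) + 1) = (δ + n) + 1 by ring, Real.Gamma_add_one h1, mul_comm]

lemma summ {δ q : ℝ} (hδ : 0 < δ) (hq0 : 0 ≤ q) (hq : q < 1) :
    Summable (fun r : ℕ => poch δ r * q ^ r / r.factorial) := by
  set ρ : ℝ := (1 + q) / 2 with hρ
  have hρ1 : ρ < 1 := by rw [hρ]; linarith
  apply summable_of_ratio_norm_eventually_le hρ1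
  have hqρ : q < ρ := by rw [hρ]; linarith
  filter_upwards [Filter.eventually_ge_atTop ⌈2 * δ * q / (1 - q)⌉₊] with n hn
  have hn' : (2 : ℝ) * δ * q / (1 - q) ≤ n := le_trans (Nat.le_ceil _) (by exact_mod_cast hn)
  have h1q : (0:ℝ) < 1 - q := by linarith
  have hkey : (δ + n) * q ≤ ρ * (n + 1) := by
    have : 2 * δ * q ≤ n * (1 - q) := by
      rw [div_le_iff₀ h1q] at hn'; linarith
    rw [hρ]; nlinarith
  have hpos : (0:ℝ) < poch δ n * q ^ n / n.factorial ∨ q = 0 ∨ True := Or.inr (Or.inr trivial)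
  have hfn : 0 ≤ poch δ n * q ^ n / n.factorial := by
    have := (poch_pos hδ n).le; positivity
  have hfact : ((n + 1).factorial : ℝ) = (n + 1) * n.factorial := by push_cast [Nat.factorial_succ]; ring
  have hstep : poch δ (n + 1) * q ^ (n + 1) / (n + 1).factorial
      = (poch δ n * q ^ n / n.factorial) * ((δ + n) * q / (n + 1)) := by
    rw [poch, Finset.prod_range_succ, ← poch, hfact, pow_succ]
    field_simp
  rw [Real.norm_eq_abs, Real.norm_eq_abs, abs_of_nonneg hfn, abs_of_nonneg (by
    have := (poch_pos hδ (n+1)).le; positivity), hstep]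
  have hratio : (δ + n) * q / (n + 1) ≤ ρ := by
    rw [div_le_iff₀ (by positivity)]; linarith
  calc poch δ n * q ^ n / n.factorial * ((δ + n) * q / (n + 1))
      ≤ poch δ n * q ^ n / n.factorial * ρ := by
        apply mul_le_mul_of_nonneg_left hratio hfn
    _ = ρ * (poch δ n * q ^ n / n.factorial) := by ring

lemma gamma_integrable {p b : ℝ} (hp : 0 < p) (hb : 0 < b) :
    IntegrableOn (fun t : ℝ => Real.exp (-(b * t)) * t ^ (p - 1)) (Ioi 0) := by
  have h1 : IntegrableOn (fun t : ℝ => Real.exp (-(b * t)) * (b * t) ^ (p - 1)) (Ioi 0) := by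
    have := (MeasureTheory.integrableOn_Ioi_comp_mul_left_iff
      (fun x : ℝ => Real.exp (-x) * x ^ (p - 1)) 0 hb).2 ?_
    · simpa using this
    · simpa using Real.GammaIntegral_convergent hp
  have h2 : IntegrableOn (fun t : ℝ => b ^ (p - 1) * (Real.exp (-(b * t)) * t ^ (p - 1)))
      (Ioi 0) := by
    apply h1.congr_fun ?_ measurableSet_Ioi
    intro t ht
    show Real.exp (-(b * t)) * (b * t) ^ (p - 1) = _
    rw [Real.mul_rpow hb.le (le_of_lt ht)]
    ring
  have h3 := h2.const_mul (b ^ (p - 1))⁻¹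
  have h3' : IntegrableOn (fun x : ℝ => (b ^ (p - 1))⁻¹ * (b ^ (p - 1) * (Real.exp (-(b * x)) * x ^ (p - 1)))) (Ioi 0) := h3
  apply h3'.congr_fun ?_ measurableSet_Ioi
  intro t ht
  show (b ^ (p-1))⁻¹ * _ = _
  rw [← mul_assoc, inv_mul_cancel₀ (by positivity), one_mul]

lemma gamma_value {p b : ℝ} (hp : 0 < p) (hb : 0 < b) :
    ∫ t in Ioi (0:ℝ), Real.exp (-(b * t)) * t ^ (p - 1) = Real.Gamma p / b ^ p := by
  have h := Real.integral_rpow_mul_exp_neg_mul_Ioi hp hb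
  rw [show ∫ t in Ioi (0:ℝ), Real.exp (-(b * t)) * t ^ (p - 1)
      = ∫ t in Ioi (0:ℝ), t ^ (p - 1) * Real.exp (-(b * t)) from by
    apply setIntegral_congr_fun measurableSet_Ioi; intro t ht; ring, h,
    Real.div_rpow zero_le_one hb.le, Real.one_rpow]
  ring

lemma interchange {a : ℕ → ℝ} {β γ b : ℝ} (hβ : 0 < β) (hγ : 0 < γ) (hb : 0 < b)
    (hsum : Summable (fun r : ℕ => |a r| * (Real.Gamma (β * r + γ) / b ^ (β * r + γ)))) :
    ∫ t in Ioi (0:ℝ), ∑' r : ℕ, a r * (Real.exp (-(b * t)) * t ^ (β * r + γ - 1))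
      = ∑' r : ℕ, a r * (Real.Gamma (β * r + γ) / b ^ (β * r + γ)) := by
  have hp : ∀ r : ℕ, 0 < β * r + γ := fun r => by positivity
  have hint : ∀ r : ℕ, Integrable (fun t : ℝ => a r * (Real.exp (-(b * t)) * t ^ (β * r + γ - 1)))
      (volume.restrict (Ioi 0)) := fun r => (gamma_integrable (hp r) hb).const_mul _
  have hnormval : ∀ r : ℕ, ∫ t in Ioi (0:ℝ),
      ‖a r * (Real.exp (-(b * t)) * t ^ (β * r + γ - 1))‖
      = |a r| * (Real.Gamma (β * r + γ) / b ^ (β * r + γ)) := by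
    intro r
    rw [← gamma_value (hp r) hb, ← MeasureTheory.integral_const_mul]
    apply setIntegral_congr_fun measurableSet_Ioi
    intro t ht
    show ‖_ * _‖ = _
    rw [norm_mul, Real.norm_eq_abs, Real.norm_eq_abs, abs_of_nonneg (mul_nonneg (Real.exp_nonneg _) (Real.rpow_nonneg (le_of_lt ht) _))]
  rw [← MeasureTheory.integral_tsum_of_summable_integral_norm hint (by
    simpa only [hnormval] using hsum)]
  exact tsum_congr fun r => by rw [MeasureTheory.integral_const_mul, gamma_value (hp r) hb]

theorem stmt7 (lam ν δ s : ℝ) (hlam : 0 < lam) (hν : ν ∈ Set.Ioc (0 : ℝ) 1)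
    (hδ : 0 < δ) (hs : 0 < s) (hsν : lam < s ^ ν) :
    ∫ t in Set.Ioi (0 : ℝ),
        Real.exp (-(s * t)) * (lam ^ δ * t ^ (δ * ν - 1) * ML3 ν (δ * ν) δ (-(lam * t ^ ν))) =
      lam ^ δ / (s ^ ν + lam) ^ δ := by
  obtain ⟨hν0, hν1⟩ := hν
  have hsνpos : 0 < s ^ ν := Real.rpow_pos_of_pos hs ν
  set q : ℝ := lam / s ^ ν with hqdef
  have hq0 : 0 ≤ q := by positivity
  have hq1 : q < 1 := (div_lt_one hsνpos).2 hsν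
  have hδν : 0 < δ * ν := mul_pos hδ hν0
  -- the base summable family
  have hS : Summable (fun r : ℕ => poch δ r * q ^ r / r.factorial) := summ hδ hq0 hq1
  -- coefficients for side 1
  set a₁ : ℕ → ℝ := fun r => lam ^ δ * poch δ r * (-lam) ^ r /
    (r.factorial * Real.Gamma (ν * r + δ * ν)) with ha₁
  have hΓpos : ∀ r : ℕ, 0 < Real.Gamma (ν * r + δ * ν) := fun r =>
    Real.Gamma_pos_of_pos (by positivity)
  -- rewrite integrand as tsum
  have hrw : ∀ t ∈ Ioi (0:ℝ),
      Real.exp (-(s * t)) * (lam ^ δ * t ^ (δ * ν - 1) * ML3 ν (δ * ν) δ (-(lam * t ^ ν)))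
      = ∑' r : ℕ, a₁ r * (Real.exp (-(s * t)) * t ^ (ν * r + δ * ν - 1)) := by
    intro t ht
    rw [ML3, show Real.exp (-(s * t)) * (lam ^ δ * t ^ (δ * ν - 1) *
        ∑' r : ℕ, poch δ r * (-(lam * t ^ ν)) ^ r / (r.factorial * Real.Gamma (ν * r + δ * ν)))
      = ∑' r : ℕ, (Real.exp (-(s * t)) * (lam ^ δ * t ^ (δ * ν - 1))) *
        (poch δ r * (-(lam * t ^ ν)) ^ r / (r.factorial * Real.Gamma (ν * r + δ * ν))) from by
        rw [tsum_mul_left]; ring]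
    refine tsum_congr fun r => ?_
    have h1 : (-(lam * t ^ ν)) ^ r = (-lam) ^ r * t ^ (ν * r) := by
      rw [show -(lam * t ^ ν) = (-lam) * t ^ ν by ring, mul_pow,
        ← Real.rpow_natCast (t ^ ν) r, ← Real.rpow_mul (le_of_lt ht)]
    have h2 : t ^ (ν * r) * t ^ (δ * ν - 1) = t ^ (ν * r + δ * ν - 1) := by
      rw [← Real.rpow_add ht]; ring_nf
    rw [ha₁]
    have hne1 : (r.factorial : ℝ) ≠ 0 := by positivity
    have hne2 : Real.Gamma (ν * r + δ * ν) ≠ 0 := (hΓpos r).ne'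
    field_simp
    rw [h1, show ν * ((r:ℝ) + δ) - 1 = ν * r + δ * ν - 1 by ring, ← h2]
    ring
  rw [setIntegral_congr_fun measurableSet_Ioi hrw]
  -- summability for side 1
  have hsum1 : Summable (fun r : ℕ =>
      |a₁ r| * (Real.Gamma (ν * r + δ * ν) / s ^ (ν * r + δ * ν))) := by
    apply Summable.congr ((hS.mul_left (lam ^ δ / s ^ (δ * ν))))
    intro r
    have hsp : s ^ (ν * (r:ℝ) + δ * ν) = (s ^ ν) ^ r * s ^ (δ * ν) := by
      rw [Real.rpow_add hs, Real.rpow_mul hs.le, Real.rpow_natCast]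
    have habs : |a₁ r| = lam ^ δ * poch δ r * lam ^ r /
        (r.factorial * Real.Gamma (ν * r + δ * ν)) := by
      rw [ha₁, abs_div, abs_mul, abs_mul, abs_pow, abs_neg,
        abs_of_pos (Real.rpow_pos_of_pos hlam δ), abs_of_pos (poch_pos hδ r),
        abs_of_pos hlam, abs_mul, Nat.abs_cast, abs_of_pos (hΓpos r)]
    rw [habs, hsp, hqdef, div_pow]
    have hne2 : Real.Gamma (ν * r + δ * ν) ≠ 0 := (hΓpos r).ne'
    field_simp
  rw [interchange hν0 hδν hs hsum1]
  -- side 2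
  set a₂ : ℕ → ℝ := fun r => (-lam) ^ r / r.factorial with ha₂
  have hΓδ : 0 < Real.Gamma δ := Real.Gamma_pos_of_pos hδ
  have hsum2 : Summable (fun r : ℕ =>
      |a₂ r| * (Real.Gamma (1 * r + δ) / (s ^ ν) ^ (1 * r + δ))) := by
    apply Summable.congr (hS.mul_left (Real.Gamma δ / (s ^ ν) ^ δ))
    intro r
    have habs : |a₂ r| = lam ^ r / r.factorial := by
      rw [ha₂, abs_div, abs_pow, abs_neg, abs_of_pos hlam, Nat.abs_cast]
    have hΓ : Real.Gamma ((1:ℝ) * r + δ) = poch δ r * Real.Gamma δ := by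
      rw [one_mul, poch_mul_Gamma hδ, add_comm]
    have hpow : (s ^ ν) ^ ((1:ℝ) * r + δ) = (s ^ ν) ^ r * (s ^ ν) ^ δ := by
      rw [one_mul, Real.rpow_add hsνpos, Real.rpow_natCast]
    rw [habs, hΓ, hpow, hqdef, div_pow]
    have : (s ^ ν) ^ δ ≠ 0 := (Real.rpow_pos_of_pos hsνpos δ).ne'
    field_simp
  have hrhs : Real.Gamma δ / (s ^ ν + lam) ^ δ
      = ∑' r : ℕ, a₂ r * (Real.Gamma (1 * r + δ) / (s ^ ν) ^ (1 * r + δ)) := by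
    rw [← interchange one_pos hδ hsνpos hsum2, ← gamma_value hδ (by positivity : (0:ℝ) < s ^ ν + lam)]
    apply setIntegral_congr_fun measurableSet_Ioi
    intro u hu
    have hexp : Real.exp (-(lam * u)) = ∑' r : ℕ, (-(lam * u)) ^ r / r.factorial := by
      rw [Real.exp_eq_exp_ℝ, NormedSpace.exp_eq_tsum_div]
    have key : Real.exp (-((s ^ ν + lam) * u)) * u ^ (δ - 1)
        = (Real.exp (-(s ^ ν * u)) * u ^ (δ - 1)) * Real.exp (-(lam * u)) := by
      rw [show -((s ^ ν + lam) * u) = -(s ^ ν * u) + -(lam * u) by ring, Real.exp_add]; ring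
    show Real.exp (-((s ^ ν + lam) * u)) * u ^ (δ - 1) = _
    rw [key, hexp, ← tsum_mul_left]
    refine tsum_congr fun r => ?_
    have h1 : (-(lam * u)) ^ r = (-lam) ^ r * u ^ (r : ℝ) := by
      rw [show -(lam * u) = (-lam) * u by ring, mul_pow, Real.rpow_natCast]
    have h2 : u ^ (r : ℝ) * u ^ (δ - 1) = u ^ ((1:ℝ) * r + δ - 1) := by
      rw [← Real.rpow_add hu]; ring_nf
    rw [ha₂, h1, ← h2]
    ring
  have hfinal : lam ^ δ / (s ^ ν + lam) ^ δ
      = (lam ^ δ / Real.Gamma δ) * (Real.Gamma δ / (s ^ ν + lam) ^ δ) := by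
    field_simp
  rw [hfinal, hrhs, tsum_mul_left.symm]
  refine tsum_congr fun r => ?_
  have hsp : s ^ (ν * (r:ℝ) + δ * ν) = (s ^ ν) ^ ((1:ℝ) * r + δ) := by
    rw [← Real.rpow_mul hs.le]
    congr 1
    ring
  have hΓ : Real.Gamma ((1:ℝ) * r + δ) = poch δ r * Real.Gamma δ := by
    rw [one_mul, poch_mul_Gamma hδ, add_comm]
  rw [ha₁, ha₂, hsp, hΓ]
  have hne1 : (r.factorial : ℝ) ≠ 0 := by positivity
  have hne2 : Real.Gamma (ν * r + δ * ν) ≠ 0 := (hΓpos r).ne'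
  have hne3 : (s ^ ν) ^ ((1:ℝ) * r + δ) ≠ 0 := (Real.rpow_pos_of_pos hsνpos _).ne'
  field_simp
end

section
/- For λ > 0, ν ∈ (0,1], δ > 0 and s > 0 with s^ν > λ: 1/s · (λ^{δk}/(s^ν+λ)^{δk} − λ^{δ(k+1)}/(s^ν+λ)^{δ(k+1)}) is the Laplace transform of the function p_k(t) = λ^{δk} t^{νδk} E_{ν,νδk+1}^{δk}(−λ t^ν) − λ^{δ(k+1)} t^{νδ(k+1)} E_{ν,νδ(k+1)+1}^{δ(k+1)}(−λ t^ν), for every integer k ≥ 0. -/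
open Real MeasureTheory intervalIntegral

section helpers
open Filter Set

lemma poch_zero (ξ : ℝ) : poch ξ 0 = 1 := by simp [poch]

lemma poch_succ (ξ : ℝ) (r : ℕ) : poch ξ (r + 1) = poch ξ r * (ξ + r) := by
  simp [poch, Finset.prod_range_succ]

lemma poch_nonneg {ξ : ℝ} (hξ : 0 ≤ ξ) (r : ℕ) : 0 ≤ poch ξ r :=
  Finset.prod_nonneg fun i _ => by positivity

lemma ratio_tendsto (ξ : ℝ) :
    Tendsto (fun n : ℕ => (ξ + n) / (n + 1)) atTop (nhds 1) := by
  have h : ∀ n : ℕ, (ξ + n) / (n + 1) = (ξ - 1) * (1 / (n + 1)) + 1 := by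
    intro n
    have h0 : (n : ℝ) + 1 ≠ 0 := by positivity
    field_simp
    ring
  simp_rw [h]
  have := (tendsto_one_div_add_atTop_nhds_zero_nat).const_mul (ξ - 1)
  simpa using this.add_const 1

lemma norm_poch_term {ξ : ℝ} (hξ : 0 ≤ ξ) (x : ℝ) (m : ℕ) :
    ‖poch ξ m / m.factorial * x ^ m‖ = poch ξ m / m.factorial * |x| ^ m := by
  rw [norm_mul, norm_div, norm_pow, Real.norm_eq_abs, Real.norm_eq_abs, Real.norm_eq_abs,
    abs_of_nonneg (poch_nonneg hξ m), abs_of_nonneg (by positivity : (0:ℝ) ≤ (m.factorial : ℝ))]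

lemma summable_poch {ξ : ℝ} (hξ : 0 ≤ ξ) {x : ℝ} (hx : |x| < 1) :
    Summable (fun n : ℕ => poch ξ n / n.factorial * x ^ n) := by
  set c := (|x| + 1) / 2 with hc
  have hc1 : c < 1 := by rw [hc]; linarith
  have hxc : |x| < c := by rw [hc]; linarith
  apply summable_of_ratio_norm_eventually_le hc1
  have hev : ∀ᶠ n : ℕ in atTop, (ξ + n) / (n + 1) * |x| ≤ c := by
    have : Tendsto (fun n : ℕ => (ξ + n) / (n + 1) * |x|) atTop (nhds (1 * |x|)) :=
      (ratio_tendsto ξ).mul_const _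
    rw [one_mul] at this
    exact this.eventually_le_const hxc
  filter_upwards [hev] with n hn
  rw [norm_poch_term hξ, norm_poch_term hξ]
  have key : poch ξ (n+1) / (n+1).factorial * |x| ^ (n+1)
      = (poch ξ n / n.factorial * |x| ^ n) * ((ξ + n) / (n + 1) * |x|) := by
    rw [poch_succ, Nat.factorial_succ]
    have h1 : ((n:ℝ) + 1) ≠ 0 := by positivity
    have h2 : ((n.factorial : ℝ)) ≠ 0 := by positivity
    push_cast
    field_simp
    ring
  rw [key, mul_comm c _]
  exact mul_le_mul_of_nonneg_left hn (by have := poch_nonneg hξ n; positivity)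

lemma summable_poch_succ {ξ : ℝ} (hξ : 0 ≤ ξ) {x : ℝ} (hx : |x| < 1) :
    Summable (fun n : ℕ => poch ξ (n + 1) / n.factorial * x ^ n) := by
  set c := (|x| + 1) / 2 with hc
  have hc1 : c < 1 := by rw [hc]; linarith
  have hxc : |x| < c := by rw [hc]; linarith
  apply summable_of_ratio_norm_eventually_le hc1
  have hev : ∀ᶠ n : ℕ in atTop, ((ξ + 1) + n) / (n + 1) * |x| ≤ c := by
    have : Tendsto (fun n : ℕ => ((ξ + 1) + n) / (n + 1) * |x|) atTop (nhds (1 * |x|)) :=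
      (ratio_tendsto (ξ + 1)).mul_const _
    rw [one_mul] at this
    exact this.eventually_le_const hxc
  filter_upwards [hev] with n hn
  have e1 : ∀ m : ℕ, ‖poch ξ (m + 1) / m.factorial * x ^ m‖
      = poch ξ (m + 1) / m.factorial * |x| ^ m := by
    intro m
    rw [norm_mul, norm_div, norm_pow, Real.norm_eq_abs, Real.norm_eq_abs, Real.norm_eq_abs,
      abs_of_nonneg (poch_nonneg hξ (m + 1)), abs_of_nonneg (by positivity : (0:ℝ) ≤ (m.factorial : ℝ))]
  rw [e1, e1]
  have key : poch ξ (n + 1 + 1) / (n+1).factorial * |x| ^ (n+1)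
      = (poch ξ (n + 1) / n.factorial * |x| ^ n) * (((ξ + 1) + n) / (n + 1) * |x|) := by
    rw [poch_succ, Nat.factorial_succ]
    have h1 : ((n:ℝ) + 1) ≠ 0 := by positivity
    have h2 : ((n.factorial : ℝ)) ≠ 0 := by positivity
    push_cast
    field_simp
    ring
  rw [key, mul_comm c _]
  exact mul_le_mul_of_nonneg_left hn (by have := poch_nonneg hξ (n+1); positivity)

lemma deriv_term_succ {ξ : ℝ} (x : ℝ) (n : ℕ) :
    poch ξ (n + 1) / (n + 1).factorial * ((n + 1 : ℕ) * x ^ (n + 1 - 1))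
      = poch ξ (n + 1) / n.factorial * x ^ n := by
  rw [Nat.factorial_succ]
  have h1 : ((n:ℝ) + 1) ≠ 0 := by positivity
  have h2 : ((n.factorial : ℝ)) ≠ 0 := by positivity
  simp only [Nat.add_sub_cancel]
  push_cast
  field_simp

lemma summable_poch_deriv {ξ : ℝ} (hξ : 0 ≤ ξ) {x : ℝ} (hx : |x| < 1) :
    Summable (fun n : ℕ => poch ξ n / n.factorial * (n * x ^ (n - 1))) := by
  rw [← summable_nat_add_iff 1]
  apply (summable_poch_succ hξ hx).congr
  intro n
  exact (deriv_term_succ x n).symm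

lemma hasDerivAt_F {ξ : ℝ} (hξ : 0 ≤ ξ) {y : ℝ} (hy : |y| < 1) :
    HasDerivAt (fun z => ∑' n : ℕ, poch ξ n / n.factorial * z ^ n)
      (∑' n : ℕ, poch ξ n / n.factorial * (n * y ^ (n - 1))) y := by
  set ρ := (|y| + 1) / 2 with hρ
  have hρ0 : 0 ≤ ρ := by positivity
  have hρ1 : ρ < 1 := by rw [hρ]; linarith
  have hyρ : |y| < ρ := by rw [hρ]; linarith
  have hρa : |ρ| < 1 := by rwa [abs_of_nonneg hρ0]
  apply hasDerivAt_tsum_of_isPreconnected (summable_poch_deriv hξ hρa)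
    Metric.isOpen_ball (convex_ball (0:ℝ) ρ).isPreconnected
    (g := fun (n : ℕ) (z : ℝ) => poch ξ n / n.factorial * z ^ n)
    (g' := fun (n : ℕ) (z : ℝ) => poch ξ n / n.factorial * ((n : ℝ) * z ^ (n - 1)))
    (y₀ := 0)
  · intro n z hz
    exact (hasDerivAt_pow n z).const_mul _
  · intro n z hz
    rw [Metric.mem_ball, dist_zero_right, Real.norm_eq_abs] at hz
    rw [Real.norm_eq_abs, abs_mul, abs_mul, abs_div, abs_pow,
      abs_of_nonneg (poch_nonneg hξ n),
      abs_of_nonneg (by positivity : (0:ℝ) ≤ (n.factorial : ℝ)),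
      abs_of_nonneg (by positivity : (0:ℝ) ≤ (n : ℝ))]
    have : |z| ^ (n - 1) ≤ ρ ^ (n - 1) := pow_le_pow_left₀ (abs_nonneg z) hz.le _
    have h0 : (0:ℝ) ≤ poch ξ n / n.factorial := by
      have := poch_nonneg hξ n; positivity
    apply mul_le_mul_of_nonneg_left _ h0
    exact mul_le_mul_of_nonneg_left this (by positivity)
  · rw [Metric.mem_ball, dist_zero_right]
    simpa using (by positivity : (0:ℝ) < ρ)
  · apply summable_of_ne_finset_zero (s := {0})
    intro n hn
    simp only [Finset.mem_singleton] at hn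
    simp [zero_pow hn]
  · rw [Metric.mem_ball, dist_zero_right, Real.norm_eq_abs]
    exact hyρ

lemma ymul_term (ξ y : ℝ) (n : ℕ) :
    y * (poch ξ n / n.factorial * (n * y ^ (n - 1))) = poch ξ n / n.factorial * (n * y ^ n) := by
  cases n with
  | zero => simp
  | succ m =>
    simp only [Nat.add_sub_cancel]
    rw [pow_succ]
    ring

lemma flip_identity {ξ : ℝ} (hξ : 0 ≤ ξ) {y : ℝ} (hy : |y| < 1) :
    (1 - y) * (∑' n : ℕ, poch ξ n / n.factorial * (n * y ^ (n - 1)))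
      = ξ * ∑' n : ℕ, poch ξ n / n.factorial * y ^ n := by
  have hD : Summable (fun n : ℕ => poch ξ n / n.factorial * (n * y ^ (n - 1))) :=
    summable_poch_deriv hξ hy
  have hS2 : Summable (fun n : ℕ => poch ξ (n + 1) / n.factorial * y ^ n) :=
    summable_poch_succ hξ hy
  have hS1 : Summable (fun n : ℕ => poch ξ n / n.factorial * y ^ n) := summable_poch hξ hy
  -- D = ∑' poch ξ (n+1)/n! y^n
  have hDval : (∑' n : ℕ, poch ξ n / n.factorial * (n * y ^ (n - 1)))
      = ∑' n : ℕ, poch ξ (n + 1) / n.factorial * y ^ n := by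
    rw [Summable.tsum_eq_zero_add hD]
    simp only [Nat.cast_zero, zero_mul, mul_zero, zero_add]
    exact tsum_congr fun n => deriv_term_succ y n
  -- y * D = ∑' poch ξ n/n! * (n * y^n)
  have hyD : y * (∑' n : ℕ, poch ξ n / n.factorial * (n * y ^ (n - 1)))
      = ∑' n : ℕ, poch ξ n / n.factorial * (n * y ^ n) := by
    rw [← tsum_mul_left]
    exact tsum_congr fun n => ymul_term ξ y n
  have hSymul : Summable (fun n : ℕ => poch ξ n / n.factorial * (n * y ^ n)) :=
    (hD.mul_left y).congr fun n => ymul_term ξ y n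
  have sub : (1 - y) * (∑' n : ℕ, poch ξ n / n.factorial * (n * y ^ (n - 1)))
      = (∑' n : ℕ, poch ξ (n + 1) / n.factorial * y ^ n)
        - ∑' n : ℕ, poch ξ n / n.factorial * (n * y ^ n) := by
    rw [sub_mul, one_mul, hyD, hDval]
  rw [sub, ← Summable.tsum_sub hS2 hSymul, ← tsum_mul_left]
  apply tsum_congr
  intro n
  rw [poch_succ]
  have h2 : ((n.factorial : ℝ)) ≠ 0 := by positivity
  field_simp
  ring

lemma hasDerivAt_G {ξ : ℝ} (hξ : 0 ≤ ξ) {y : ℝ} (hy : y ∈ Set.Ioo (-1:ℝ) 1) :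
    HasDerivAt (fun z => (1 - z) ^ ξ * ∑' n : ℕ, poch ξ n / n.factorial * z ^ n) 0 y := by
  obtain ⟨hy1, hy2⟩ := hy
  have hay : |y| < 1 := abs_lt.2 ⟨hy1, hy2⟩
  have h1y : 0 < 1 - y := by linarith
  have h1 : HasDerivAt (fun z : ℝ => 1 - z) (-1) y := (hasDerivAt_id y).const_sub 1
  have h2 : HasDerivAt (fun z : ℝ => (1 - z) ^ ξ) (ξ * (1 - y) ^ (ξ - 1) * (-1)) y := by
    have := (Real.hasDerivAt_rpow_const (x := 1 - y) (p := ξ) (Or.inl h1y.ne')).comp y h1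
    exact this
  have hF := hasDerivAt_F hξ hay
  have hmul := h2.mul hF
  have key : ξ * (1 - y) ^ (ξ - 1) * (-1) * (∑' n : ℕ, poch ξ n / n.factorial * y ^ n)
      + (1 - y) ^ ξ * (∑' n : ℕ, poch ξ n / n.factorial * (↑n * y ^ (n - 1))) = 0 := by
    have hpow : (1 - y) ^ ξ = (1 - y) ^ (ξ - 1) * (1 - y) := by
      rw [← Real.rpow_add_one h1y.ne' (ξ - 1)]
      ring_nf
    rw [hpow, mul_assoc ((1-y) ^ (ξ-1)) _ _, flip_identity hξ hay]
    ring
  rw [key] at hmul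
  exact hmul

lemma binomial_sum {ξ : ℝ} (hξ : 0 ≤ ξ) {x : ℝ} (hx : |x| < 1) :
    ∑' n : ℕ, poch ξ n / n.factorial * x ^ n = (1 - x) ^ (-ξ) := by
  have hx' : x ∈ Set.Ioo (-1:ℝ) 1 := ⟨(abs_lt.1 hx).1, (abs_lt.1 hx).2⟩
  have h0 : (0:ℝ) ∈ Set.Ioo (-1:ℝ) 1 := by norm_num
  set G := fun z => (1 - z) ^ ξ * ∑' n : ℕ, poch ξ n / n.factorial * z ^ n with hG
  have hconst : G x = G 0 := by
    apply Convex.is_const_of_fderivWithin_eq_zero (convex_Ioo (-1:ℝ) 1)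
      (fun y hy => ((hasDerivAt_G hξ hy).differentiableAt).differentiableWithinAt)
      _ hx' h0
    intro y hy
    rw [fderivWithin_of_isOpen isOpen_Ioo hy]
    have := ((hasDerivAt_G hξ (y := y) hy)).hasFDerivAt.fderiv
    rw [this]
    ext v
    simp
  have hF0 : (∑' n : ℕ, poch ξ n / n.factorial * (0:ℝ) ^ n) = 1 := by
    rw [tsum_eq_single 0]
    · simp [poch_zero]
    · intro n hn
      simp [zero_pow hn]
  have hG0 : G 0 = 1 := by
    rw [hG]
    simp only [sub_zero, Real.one_rpow, one_mul]
    exact hF0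
  have h1x : 0 < 1 - x := by linarith [hx'.2]
  have hGx : (1 - x) ^ ξ * ∑' n : ℕ, poch ξ n / n.factorial * x ^ n = 1 := by
    simpa [hG] using hconst.trans hG0
  have hne : (1 - x) ^ ξ ≠ 0 := (Real.rpow_pos_of_pos h1x ξ).ne'
  rw [Real.rpow_neg h1x.le]
  exact eq_inv_of_mul_eq_one_left (by linarith [hGx] : (∑' n : ℕ, poch ξ n / n.factorial * x ^ n) * (1 - x) ^ ξ = 1)

section ml3sum

variable {ν γ ξ : ℝ} (hν : 0 < ν) (hγ : 1 ≤ γ) (hξ : 0 ≤ ξ) (z : ℝ)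

lemma poch_add_le {ξ : ℝ} (hξ : 0 ≤ ξ) (n m : ℕ) :
    poch ξ (n + m) ≤ poch ξ n * (ξ + n + m) ^ m := by
  rw [poch, Finset.prod_range_add]
  apply mul_le_mul_of_nonneg_left _ (poch_nonneg hξ n)
  calc ∏ i ∈ Finset.range m, (ξ + ↑(n + i))
      ≤ ∏ _i ∈ Finset.range m, (ξ + n + m) := by
        apply Finset.prod_le_prod
        · intro i _; positivity
        · intro i hi
          rw [Finset.mem_range] at hi
          push_cast
          have : (i : ℝ) ≤ m := by exact_mod_cast hi.le
          linarith
    _ = (ξ + n + m) ^ m := by rw [Finset.prod_const, Finset.card_range]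

lemma gamma_step (hν : 0 < ν) (hγ : 1 ≤ γ) {m : ℕ} (hm : 2 ≤ ν * m) (n : ℕ) :
    (ν * n + γ) * (ν * n + γ + 1) * Real.Gamma (ν * n + γ)
      ≤ Real.Gamma (ν * (n + m) + γ) := by
  have hx : 0 < ν * n + γ := by positivity
  have e1 : Real.Gamma (ν * n + γ + 2) = (ν * n + γ) * (ν * n + γ + 1) * Real.Gamma (ν * n + γ) := by
    have h1 : Real.Gamma (ν * n + γ + 1 + 1) = (ν * n + γ + 1) * Real.Gamma (ν * n + γ + 1) :=
      Real.Gamma_add_one (by positivity)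
    have h2 : Real.Gamma (ν * n + γ + 1) = (ν * n + γ) * Real.Gamma (ν * n + γ) :=
      Real.Gamma_add_one hx.ne'
    calc Real.Gamma (ν * n + γ + 2) = Real.Gamma (ν * n + γ + 1 + 1) := by ring_nf
      _ = (ν * n + γ + 1) * ((ν * n + γ) * Real.Gamma (ν * n + γ)) := by rw [h1, h2]
      _ = (ν * n + γ) * (ν * n + γ + 1) * Real.Gamma (ν * n + γ) := by ring
  rw [← e1]
  apply (Real.Gamma_strictMonoOn_Ici.monotoneOn)
  · simp only [Set.mem_Ici]; linarith
  · simp only [Set.mem_Ici]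
    have : (0:ℝ) ≤ ν * n := by positivity
    push_cast
    nlinarith
  · push_cast
    nlinarith [mul_nonneg hν.le (Nat.cast_nonneg n : (0:ℝ) ≤ n)]

lemma summable_ml3_abs (hν : 0 < ν) (hγ : 1 ≤ γ) (hξ : 0 ≤ ξ) (z : ℝ) :
    Summable (fun r : ℕ => poch ξ r * |z| ^ r / (r.factorial * Real.Gamma (ν * r + γ))) := by
  set g := fun r : ℕ => poch ξ r * |z| ^ r / (r.factorial * Real.Gamma (ν * r + γ)) with hg
  have hgnn : ∀ r, 0 ≤ g r := by
    intro r
    have h1 := poch_nonneg hξ r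
    have h2 : 0 < Real.Gamma (ν * r + γ) := Real.Gamma_pos_of_pos (by positivity)
    positivity
  -- choose m
  obtain ⟨m, hm1, hm2⟩ : ∃ m : ℕ, 1 ≤ m ∧ 2 ≤ ν * m := by
    refine ⟨⌈2 / ν⌉₊ + 1, by omega, ?_⟩
    have h1 : 2 / ν ≤ (⌈2 / ν⌉₊ : ℝ) := Nat.le_ceil _
    have h2 : (⌈2 / ν⌉₊ : ℝ) ≤ ((⌈2 / ν⌉₊ + 1 : ℕ) : ℝ) := by push_cast; linarith
    calc (2:ℝ) = ν * (2 / ν) := by field_simp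
      _ ≤ ν * ((⌈2 / ν⌉₊ + 1 : ℕ) : ℝ) := by
          apply mul_le_mul_of_nonneg_left _ hν.le
          linarith
  haveI : NeZero m := ⟨by omega⟩
  -- u sequence
  set u := fun n : ℕ => |z| ^ m * (((ξ + m) + n) / (n + 1)) ^ m
      * ((ν * n + γ) * (ν * n + γ + 1))⁻¹ with hu
  have hu_tendsto : Tendsto u atTop (nhds 0) := by
    have t1 : Tendsto (fun n : ℕ => (((ξ + m) + n) / (n + 1)) ^ m) atTop (nhds (1 ^ m)) :=
      (ratio_tendsto (ξ + m)).pow m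
    have t2 : Tendsto (fun n : ℕ => ((ν * n + γ) * (ν * n + γ + 1))⁻¹) atTop (nhds 0) := by
      apply Tendsto.comp tendsto_inv_atTop_zero
      apply Filter.Tendsto.atTop_mul_atTop₀
      · apply tendsto_atTop_add_const_right
        exact (tendsto_natCast_atTop_atTop (R := ℝ)).const_mul_atTop hν
      · apply tendsto_atTop_add_const_right
        apply tendsto_atTop_add_const_right
        exact (tendsto_natCast_atTop_atTop (R := ℝ)).const_mul_atTop hν
    have h := ((tendsto_const_nhds (x := |z| ^ m) (f := atTop (α := ℕ))).mul t1).mul t2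
    rw [hu]
    convert h using 2
    norm_num
  have hu_nn : ∀ n, 0 ≤ u n := by
    intro n
    have h0 : (0:ℝ) < ν * n + γ := by positivity
    have h3 : (0:ℝ) ≤ ((ξ + m) + n) / (n + 1) := by positivity
    positivity
  -- the step bound
  have hstep : ∀ n : ℕ, g (n + m) ≤ u n * g n := by
    intro n
    have hΓn : 0 < Real.Gamma (ν * n + γ) := Real.Gamma_pos_of_pos (by positivity)
    have hΓnm : 0 < Real.Gamma (ν * (n + m) + γ) := Real.Gamma_pos_of_pos (by positivity)
    have hfac : (0:ℝ) < (n.factorial : ℝ) := by positivity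
    have hx : (0:ℝ) < ν * n + γ := by positivity
    have key : g (n + m) ≤ (poch ξ n * (ξ + n + m) ^ m * (|z| ^ n * |z| ^ m)) /
        ((n.factorial * (n+1) ^ m) * ((ν * n + γ) * (ν * n + γ + 1) * Real.Gamma (ν * n + γ))) := by
      rw [hg]
      simp only []
      push_cast
      rw [div_le_div_iff₀ (by positivity) (by positivity)]
      have hA : poch ξ (n + m) ≤ poch ξ n * (ξ + n + m) ^ m := poch_add_le hξ n m
      have hB : (n.factorial : ℝ) * (n+1) ^ m ≤ ((n+m).factorial : ℝ) := by
        exact_mod_cast Nat.factorial_mul_pow_le_factorial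
      have hC := gamma_step hν hγ hm2 n
      push_cast at hC
      have hzp : |z| ^ (n + m) = |z| ^ n * |z| ^ m := pow_add _ _ _
      rw [hzp]
      have h1 : (0:ℝ) ≤ poch ξ n * (ξ + n + m) ^ m := by
        have := poch_nonneg hξ n; positivity
      have h2 : (0:ℝ) ≤ |z| ^ n * |z| ^ m := by positivity
      have h3 : (0:ℝ) ≤ poch ξ (n+m) := poch_nonneg hξ _
      calc poch ξ (n + m) * (|z| ^ n * |z| ^ m)
            * ((n.factorial * (n+1) ^ m) * ((ν * n + γ) * (ν * n + γ + 1) * Real.Gamma (ν * n + γ)))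
          ≤ (poch ξ n * (ξ + n + m) ^ m) * (|z| ^ n * |z| ^ m)
            * (((n+m).factorial : ℝ) * Real.Gamma (ν * (n + m) + γ)) := by
            apply mul_le_mul
            · exact mul_le_mul_of_nonneg_right hA h2
            · exact mul_le_mul hB hC (by positivity) (by positivity)
            · positivity
            · positivity
        _ = poch ξ n * (ξ + n + m) ^ m * (|z| ^ n * |z| ^ m)
            * (((n+m).factorial : ℝ) * Real.Gamma (ν * (n + m) + γ)) := by ring
    calc g (n + m) ≤ _ := key
      _ = u n * g n := by
          rw [hu, hg]
          have h1 : ((n:ℝ) + 1) ≠ 0 := by positivity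
          have h2 : (ν * n + γ + 1) ≠ 0 := by positivity
          simp only [div_pow]
          field_simp
          ring
  -- slices are summable
  have hslice : ∀ j : Fin m, Summable (fun i : ℕ => g (i * m + (j : ℕ))) := by
    intro j
    apply summable_of_ratio_norm_eventually_le (r := 1/2) (by norm_num)
    have hlin : Tendsto (fun i : ℕ => i * m + (j : ℕ)) atTop atTop := by
      apply Filter.tendsto_atTop_atTop.2
      intro b
      exact ⟨b, fun i hi => le_trans (le_trans hi (Nat.le_mul_of_pos_right i (by omega)))
        (Nat.le_add_right _ _)⟩
    have hev : ∀ᶠ i : ℕ in atTop, u (i * m + (j : ℕ)) ≤ 1/2 :=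
      (hu_tendsto.comp hlin).eventually_le_const (by norm_num)
    filter_upwards [hev] with i hi
    have harith : (i + 1) * m + (j : ℕ) = (i * m + (j : ℕ)) + m := by ring
    rw [harith, Real.norm_eq_abs, Real.norm_eq_abs,
      abs_of_nonneg (hgnn _), abs_of_nonneg (hgnn _)]
    calc g (i * m + (j:ℕ) + m) ≤ u (i * m + (j:ℕ)) * g (i * m + (j:ℕ)) := hstep _
      _ ≤ 1/2 * g (i * m + (j:ℕ)) := mul_le_mul_of_nonneg_right hi (hgnn _)
  -- combine slices
  let e : ℕ ≃ Fin m × ℕ := (Nat.divModEquiv m).trans (Equiv.prodComm _ _)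
  rw [← e.symm.summable_iff]
  have hcomp : (g ∘ e.symm) = fun p : Fin m × ℕ => g (p.2 * m + (p.1 : ℕ)) := by
    funext p
    simp [e, Nat.divModEquiv, Equiv.symm_trans_apply]
  rw [hcomp]
  rw [summable_prod_of_nonneg (fun p => hgnn _)]
  constructor
  · intro j
    exact hslice j
  · apply Summable.of_finite

end ml3sum

-- base integral facts
lemma base_integrable {p s : ℝ} (hp : 0 ≤ p) (hs : 0 < s) :
    IntegrableOn (fun t : ℝ => t ^ p * Real.exp (-(s * t))) (Ioi 0) := by
  have h := integrableOn_rpow_mul_exp_neg_mul_rpow (p := 1) (s := p) (b := s)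
    (by linarith) zero_lt_one hs
  have : (fun t : ℝ => t ^ p * Real.exp (-s * t ^ (1:ℝ))) =
      fun t : ℝ => t ^ p * Real.exp (-(s * t)) := by
    funext t
    rw [Real.rpow_one, neg_mul]
  rwa [this] at h

lemma base_integral {p s : ℝ} (hp : 0 ≤ p) (hs : 0 < s) :
    ∫ t in Ioi (0:ℝ), t ^ p * Real.exp (-(s * t))
      = (1 / s) ^ (p + 1) * Real.Gamma (p + 1) := by
  have h := integral_rpow_mul_exp_neg_mul_Ioi (a := p + 1) (r := s) (by linarith) hs
  simpa using h

noncomputable def aterm (lam ν s ξ : ℝ) (r : ℕ) (t : ℝ) : ℝ :=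
  (lam ^ ξ * (poch ξ r * (-lam) ^ r / (r.factorial * Real.Gamma (ν * r + ν * ξ + 1))))
    * (t ^ (ν * r + ν * ξ) * Real.exp (-(s * t)))

section key

variable {lam ν s ξ : ℝ}

lemma aterm_integrable (hν : 0 < ν) (hξ : 0 ≤ ξ) (hs : 0 < s) (r : ℕ) :
    IntegrableOn (aterm lam ν s ξ r) (Ioi 0) :=
  (base_integrable (p := ν * r + ν * ξ) (by positivity) hs).const_mul _

lemma aterm_integral (hν : 0 < ν) (hξ : 0 ≤ ξ) (hs : 0 < s) (r : ℕ) :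
    ∫ t in Ioi (0:ℝ), aterm lam ν s ξ r t
      = (lam ^ ξ * (poch ξ r * (-lam) ^ r / (r.factorial * Real.Gamma (ν * r + ν * ξ + 1))))
        * ((1 / s) ^ (ν * r + ν * ξ + 1) * Real.Gamma (ν * r + ν * ξ + 1)) := by
  unfold aterm
  rw [MeasureTheory.integral_const_mul, base_integral (by positivity) hs]

lemma aterm_norm_integral (hlam : 0 < lam) (hν : 0 < ν) (hξ : 0 ≤ ξ) (hs : 0 < s) (r : ℕ) :
    ∫ t in Ioi (0:ℝ), ‖aterm lam ν s ξ r t‖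
      = (lam ^ ξ * (poch ξ r * lam ^ r / (r.factorial * Real.Gamma (ν * r + ν * ξ + 1))))
        * ((1 / s) ^ (ν * r + ν * ξ + 1) * Real.Gamma (ν * r + ν * ξ + 1)) := by
  have hΓ : 0 < Real.Gamma (ν * r + ν * ξ + 1) := Real.Gamma_pos_of_pos (by positivity)
  have hpoch : 0 ≤ poch ξ r := Finset.prod_nonneg fun i _ => by positivity
  have congr1 : ∫ t in Ioi (0:ℝ), ‖aterm lam ν s ξ r t‖
      = ∫ t in Ioi (0:ℝ),
        (lam ^ ξ * (poch ξ r * lam ^ r / (r.factorial * Real.Gamma (ν * r + ν * ξ + 1))))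
          * (t ^ (ν * r + ν * ξ) * Real.exp (-(s * t))) := by
    apply setIntegral_congr_fun measurableSet_Ioi
    intro t ht
    unfold aterm
    simp only []
    rw [Real.norm_eq_abs, abs_mul, abs_mul, abs_mul, abs_div, abs_mul, abs_pow, abs_neg,
      abs_of_nonneg (Real.rpow_nonneg hlam.le ξ), abs_of_nonneg hpoch,
      abs_of_nonneg (by positivity : (0:ℝ) ≤ (r.factorial : ℝ) * Real.Gamma (ν * r + ν * ξ + 1)),
      abs_of_nonneg (Real.rpow_nonneg (le_of_lt ht) _),
      abs_of_nonneg (Real.exp_nonneg _), abs_of_nonneg hlam.le]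
  rw [congr1, MeasureTheory.integral_const_mul, base_integral (by positivity) hs]

end key

lemma summable_ml3' {ν γ ξ : ℝ} (hν : 0 < ν) (hγ : 1 ≤ γ) (hξ : 0 ≤ ξ) (z : ℝ) :
    Summable (fun r : ℕ => poch ξ r * z ^ r / (r.factorial * Real.Gamma (ν * r + γ))) := by
  apply Summable.of_norm
  apply (summable_ml3_abs hν hγ hξ z).congr
  intro r
  have hΓ : 0 < Real.Gamma (ν * r + γ) := Real.Gamma_pos_of_pos (by positivity)
  have hp := poch_nonneg hξ r
  rw [Real.norm_eq_abs, abs_div, abs_mul, abs_pow, abs_of_nonneg hp,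
    abs_of_nonneg (by positivity : (0:ℝ) ≤ (r.factorial : ℝ) * Real.Gamma (ν * r + γ))]

section key2

variable {lam ν s ξ : ℝ}

lemma coeff_eq (hlam : 0 < lam) (hν : 0 < ν) (hs : 0 < s) (hξ : 0 ≤ ξ) (x : ℝ) (r : ℕ) :
    lam ^ ξ * (poch ξ r * x ^ r / (r.factorial * Real.Gamma (ν * r + ν * ξ + 1)))
        * ((1 / s) ^ (ν * r + ν * ξ + 1) * Real.Gamma (ν * r + ν * ξ + 1))
      = (lam ^ ξ * (1 / s) ^ (ν * ξ + 1)) * (poch ξ r / r.factorial * (x * (1 / s) ^ ν) ^ r) := by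
  have hΓ : 0 < Real.Gamma (ν * r + ν * ξ + 1) := Real.Gamma_pos_of_pos (by positivity)
  have hfac : (0:ℝ) < (r.factorial : ℝ) := by positivity
  have hsplit : (1 / s) ^ (ν * r + ν * ξ + 1) = ((1 / s) ^ ν) ^ (r:ℕ) * (1 / s) ^ (ν * ξ + 1) := by
    rw [show ν * r + ν * ξ + 1 = ν * r + (ν * ξ + 1) by ring,
      Real.rpow_add (by positivity), ← Real.rpow_natCast ((1 / s) ^ ν) r,
      ← Real.rpow_mul (by positivity)]
  rw [hsplit, mul_pow]
  field_simp

lemma q_lt_one (hlam : 0 < lam) (hν : 0 < ν) (hs : 0 < s) (hsν : lam < s ^ ν) :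
    0 < lam * (1 / s) ^ ν ∧ lam * (1 / s) ^ ν < 1 := by
  have hA : 0 < s ^ ν := Real.rpow_pos_of_pos hs ν
  have hinv : (1 / s) ^ ν = (s ^ ν)⁻¹ := by
    rw [one_div, ← Real.inv_rpow hs.le]
  constructor
  · rw [hinv]; positivity
  · rw [hinv]
    rw [mul_inv_lt_iff₀ hA, one_mul]
    exact hsν

lemma sum_aterm_integral (hlam : 0 < lam) (hν : 0 < ν) (hs : 0 < s) (hξ : 0 ≤ ξ)
    (hsν : lam < s ^ ν) :
    ∑' r : ℕ, ∫ t in Ioi (0:ℝ), aterm lam ν s ξ r t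
      = 1 / s * (lam ^ ξ / (s ^ ν + lam) ^ ξ) := by
  set q := lam * (1 / s) ^ ν with hqdef
  obtain ⟨hq0, hq1⟩ := q_lt_one hlam hν hs hsν
  have hA : 0 < s ^ ν := Real.rpow_pos_of_pos hs ν
  have hB : 0 < s ^ ν + lam := by positivity
  have hinv : (1 / s) ^ ν = (s ^ ν)⁻¹ := by rw [one_div, ← Real.inv_rpow hs.le]
  have hterm : ∀ r : ℕ, ∫ t in Ioi (0:ℝ), aterm lam ν s ξ r t
      = (lam ^ ξ * (1 / s) ^ (ν * ξ + 1)) * (poch ξ r / r.factorial * (-q) ^ r) := by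
    intro r
    rw [aterm_integral hν hξ hs r, coeff_eq hlam hν hs hξ (-lam) r, neg_mul]
  rw [tsum_congr hterm, tsum_mul_left, binomial_sum hξ (x := -q) (by rwa [abs_neg, abs_of_pos hq0]),
    sub_neg_eq_add]
  -- final algebra
  have h1 : (1:ℝ) + q = (s ^ ν + lam) / s ^ ν := by
    rw [hqdef, hinv]
    field_simp
  have h2 : ((1:ℝ) + q) ^ (-ξ) = (s ^ ν) ^ ξ / (s ^ ν + lam) ^ ξ := by
    rw [h1, Real.rpow_neg (by positivity), Real.div_rpow hB.le hA.le, inv_div]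
  have h3 : (1 / s) ^ (ν * ξ + 1) = ((s ^ ν) ^ ξ)⁻¹ * (1 / s) := by
    rw [show ν * ξ + 1 = ν * ξ + 1 by rfl, Real.rpow_add (by positivity), Real.rpow_one,
      Real.rpow_mul (by positivity), hinv, Real.inv_rpow hA.le]
  rw [h2, h3]
  have hAξ : (0:ℝ) < (s ^ ν) ^ ξ := Real.rpow_pos_of_pos hA ξ
  have hBξ : (0:ℝ) < (s ^ ν + lam) ^ ξ := Real.rpow_pos_of_pos hB ξ
  field_simp

lemma summable_norm_aterm_integrals (hlam : 0 < lam) (hν : 0 < ν) (hs : 0 < s) (hξ : 0 ≤ ξ)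
    (hsν : lam < s ^ ν) :
    Summable (fun r : ℕ => ∫ t in Ioi (0:ℝ), ‖aterm lam ν s ξ r t‖) := by
  obtain ⟨hq0, hq1⟩ := q_lt_one hlam hν hs hsν
  have hterm : ∀ r : ℕ, ∫ t in Ioi (0:ℝ), ‖aterm lam ν s ξ r t‖
      = (lam ^ ξ * (1 / s) ^ (ν * ξ + 1))
        * (poch ξ r / r.factorial * (lam * (1 / s) ^ ν) ^ r) := by
    intro r
    rw [aterm_norm_integral hlam hν hξ hs r, coeff_eq hlam hν hs hξ lam r]
  apply Summable.congr _ (fun r => (hterm r).symm)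
  exact (summable_poch hξ (by rwa [abs_of_pos hq0])).mul_left _

lemma aterm_term_eq (hlam : 0 < lam) (hν : 0 < ν) (hs : 0 < s) (hξ : 0 ≤ ξ)
    {t : ℝ} (ht : 0 < t) (r : ℕ) :
    (Real.exp (-(s * t)) * (lam ^ ξ * t ^ (ν * ξ)))
        * (poch ξ r * (-(lam * t ^ ν)) ^ r / (r.factorial * Real.Gamma (ν * r + (ν * ξ + 1))))
      = aterm lam ν s ξ r t := by
  have e1 : (-(lam * t ^ ν)) ^ r = (-lam) ^ r * (t ^ ν) ^ r := by
    rw [← neg_mul, mul_pow]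
  have e2 : (t ^ ν) ^ r = t ^ (ν * r) := by
    rw [← Real.rpow_natCast (t ^ ν) r, ← Real.rpow_mul ht.le]
  have e3 : ν * (r:ℝ) + (ν * ξ + 1) = ν * r + ν * ξ + 1 := by ring
  have e4 : t ^ (ν * ξ) * t ^ (ν * (r:ℝ)) = t ^ (ν * r + ν * ξ) := by
    rw [← Real.rpow_add ht]; ring_nf
  unfold aterm
  rw [e1, e2, e3, ← e4]
  ring

lemma aterm_pointwise_summable (hlam : 0 < lam) (hν : 0 < ν) (hs : 0 < s) (hξ : 0 ≤ ξ)
    {t : ℝ} (ht : 0 < t) :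
    Summable (fun r : ℕ => aterm lam ν s ξ r t) := by
  apply Summable.congr _ (fun r => aterm_term_eq hlam hν hs hξ ht r)
  exact (summable_ml3' hν (by linarith [mul_nonneg hν.le hξ] : 1 ≤ ν * ξ + 1) hξ
    (-(lam * t ^ ν))).mul_left _

lemma aterm_tsum_eq (hlam : 0 < lam) (hν : 0 < ν) (hs : 0 < s) (hξ : 0 ≤ ξ)
    {t : ℝ} (ht : 0 < t) :
    Real.exp (-(s * t)) * (lam ^ ξ * t ^ (ν * ξ) * ML3 ν (ν * ξ + 1) ξ (-(lam * t ^ ν)))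
      = ∑' r : ℕ, aterm lam ν s ξ r t := by
  unfold ML3
  rw [show Real.exp (-(s * t)) * (lam ^ ξ * t ^ (ν * ξ)
        * ∑' r : ℕ, poch ξ r * (-(lam * t ^ ν)) ^ r
            / (r.factorial * Real.Gamma (ν * r + (ν * ξ + 1))))
      = (Real.exp (-(s * t)) * (lam ^ ξ * t ^ (ν * ξ)))
        * ∑' r : ℕ, poch ξ r * (-(lam * t ^ ν)) ^ r
            / (r.factorial * Real.Gamma (ν * r + (ν * ξ + 1))) by ring,
    ← tsum_mul_left]
  exact tsum_congr fun r => aterm_term_eq hlam hν hs hξ ht r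

end key2


end helpers

open Filter Set in
theorem stmt8 (lam ν δ s : ℝ) (k : ℕ) (hlam : 0 < lam) (hν : ν ∈ Set.Ioc (0 : ℝ) 1)
    (hδ : 0 < δ) (hs : 0 < s) (hsν : lam < s ^ ν) :
    ∫ t in Set.Ioi (0 : ℝ),
        Real.exp (-(s * t)) *
          (lam ^ (δ * k) * t ^ (ν * δ * k) * ML3 ν (ν * δ * k + 1) (δ * k) (-(lam * t ^ ν)) -
            lam ^ (δ * (k + 1)) * t ^ (ν * δ * (k + 1)) *
              ML3 ν (ν * δ * (k + 1) + 1) (δ * (k + 1)) (-(lam * t ^ ν))) =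
      (1 / s) * (lam ^ (δ * k) / (s ^ ν + lam) ^ (δ * k) -
        lam ^ (δ * (k + 1)) / (s ^ ν + lam) ^ (δ * (k + 1))) := by
  obtain ⟨hν0, hν1⟩ := hν
  rw [mul_assoc ν δ (k:ℝ), mul_assoc ν δ ((k:ℝ) + 1)]
  set ξ₁ := δ * (k:ℝ) with hξ₁def
  set ξ₂ := δ * ((k:ℝ) + 1) with hξ₂def
  have hξ₁ : 0 ≤ ξ₁ := by positivity
  have hξ₂ : 0 ≤ ξ₂ := by positivity
  set a₁ := aterm lam ν s ξ₁ with ha₁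
  set a₂ := aterm lam ν s ξ₂ with ha₂
  have h_int1 : ∀ r, IntegrableOn (a₁ r) (Ioi 0) := aterm_integrable hν0 hξ₁ hs
  have h_int2 : ∀ r, IntegrableOn (a₂ r) (Ioi 0) := aterm_integrable hν0 hξ₂ hs
  have hnorm1 := summable_norm_aterm_integrals hlam hν0 hs hξ₁ hsν
  have hnorm2 := summable_norm_aterm_integrals hlam hν0 hs hξ₂ hsν
  have hb_int : ∀ r : ℕ, Integrable (fun t => a₁ r t - a₂ r t) (volume.restrict (Ioi 0)) :=
    fun r => (h_int1 r).sub (h_int2 r)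
  have hb_norm_sum : Summable (fun r : ℕ => ∫ t in Ioi (0:ℝ), ‖a₁ r t - a₂ r t‖) := by
    apply Summable.of_nonneg_of_le
      (fun r => integral_nonneg fun t => norm_nonneg _)
      (fun r => ?_) (hnorm1.add hnorm2)
    calc ∫ t in Ioi (0:ℝ), ‖a₁ r t - a₂ r t‖
        ≤ ∫ t in Ioi (0:ℝ), (‖a₁ r t‖ + ‖a₂ r t‖) := by
          apply integral_mono_of_nonneg
          · filter_upwards with t; exact norm_nonneg _
          · exact ((h_int1 r).norm.add (h_int2 r).norm)
          · filter_upwards with t; exact norm_sub_le _ _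
      _ = (∫ t in Ioi (0:ℝ), ‖a₁ r t‖) + ∫ t in Ioi (0:ℝ), ‖a₂ r t‖ :=
          integral_add (h_int1 r).norm (h_int2 r).norm
  have hsum := MeasureTheory.hasSum_integral_of_summable_integral_norm hb_int hb_norm_sum
  have hpoint : ∀ t ∈ Ioi (0:ℝ),
      Real.exp (-(s * t)) *
          (lam ^ ξ₁ * t ^ (ν * ξ₁) * ML3 ν (ν * ξ₁ + 1) ξ₁ (-(lam * t ^ ν)) -
            lam ^ ξ₂ * t ^ (ν * ξ₂) * ML3 ν (ν * ξ₂ + 1) ξ₂ (-(lam * t ^ ν)))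
        = ∑' r : ℕ, (a₁ r t - a₂ r t) := by
    intro t ht
    rw [Set.mem_Ioi] at ht
    rw [mul_sub, aterm_tsum_eq hlam hν0 hs hξ₁ ht, aterm_tsum_eq hlam hν0 hs hξ₂ ht,
      ← Summable.tsum_sub (aterm_pointwise_summable hlam hν0 hs hξ₁ ht)
        (aterm_pointwise_summable hlam hν0 hs hξ₂ ht)]
  rw [setIntegral_congr_fun measurableSet_Ioi hpoint, ← hsum.tsum_eq]
  have hint_eq : ∀ r : ℕ, (∫ t in Ioi (0:ℝ), (a₁ r t - a₂ r t))
      = (∫ t in Ioi (0:ℝ), a₁ r t) - ∫ t in Ioi (0:ℝ), a₂ r t :=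
    fun r => integral_sub (h_int1 r) (h_int2 r)
  have hs1 : Summable (fun r : ℕ => ∫ t in Ioi (0:ℝ), a₁ r t) :=
    Summable.of_norm_bounded hnorm1 fun r => norm_integral_le_integral_norm _
  have hs2 : Summable (fun r : ℕ => ∫ t in Ioi (0:ℝ), a₂ r t) :=
    Summable.of_norm_bounded hnorm2 fun r => norm_integral_le_integral_norm _
  rw [tsum_congr hint_eq, Summable.tsum_sub hs1 hs2,
    sum_aterm_integral hlam hν0 hs hξ₁ hsν, sum_aterm_integral hlam hν0 hs hξ₂ hsν,
    mul_sub]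
end
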